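/- arXiv:1811.02503 — 3 statements merged into one kernel-verified Lean document; each statement's English description precedes it below -/
import Mathlib

section
/- (Equation (4) in the proof of Theorem 1.) Let V be a finite set and (A, S, B) a partition of V with A, B, S nonempty. Let n₁, n₂ > 0 be real numbers and let M, M⁽¹⁾, M⁽²⁾ be symmetric positive definite V×V matrices, each of whose inverse has zero (A,B) block. For nonempty U ⊆ V set λ(U) := n₁ · log(det M_U / det M⁽¹⁾_U) + n₂ · log(det M_U / det M⁽²⁾_U), and for a symmetric positive definite V×V matrix N let K_B(N) := (N_B − N_{B,S} N_S⁻¹ N_{S,B})⁻¹. Then λ(V) = λ(A ∪ S) + n₁ · log(det K_B(M⁽¹⁾) / det K_B(M)) + n₂ · log(det K_B(M⁽²⁾) / det K_B(M)). -/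
open Matrix

/-- Sub-matrix of `M` with rows indexed by `A` and columns indexed by `B`. -/
def msub {V : Type*} [Fintype V] [DecidableEq V] (M : Matrix V V ℝ) (A B : Finset V) :
    Matrix A B ℝ :=
  M.submatrix (fun a => a.1) (fun b => b.1)

/-- Principal sub-matrix of `M` indexed by the finset `A`. -/
def psub {V : Type*} [Fintype V] [DecidableEq V] (M : Matrix V V ℝ) (A : Finset V) :
    Matrix A A ℝ :=
  msub M A A

/-- The log likelihood ratio criterion
`λ(U) = n₁ log(det M_U / det M⁽¹⁾_U) + n₂ log(det M_U / det M⁽²⁾_U)`. -/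
noncomputable def lam {V : Type*} [Fintype V] [DecidableEq V]
    (n₁ n₂ : ℝ) (M M₁ M₂ : Matrix V V ℝ) (A : Finset V) : ℝ :=
  n₁ * Real.log ((psub M A).det / (psub M₁ A).det) +
    n₂ * Real.log ((psub M A).det / (psub M₂ A).det)

/-- `K_B(N) = (N_B − N_{B,S} N_S⁻¹ N_{S,B})⁻¹`, the inverse of the Schur complement
of `N_S` in `N_{B∪S}`. -/
noncomputable def KB {V : Type*} [Fintype V] [DecidableEq V]
    (N : Matrix V V ℝ) (B S : Finset V) : Matrix B B ℝ :=
  (psub N B - msub N B S * (psub N S)⁻¹ * msub N S B)⁻¹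

section helpers

variable {V : Type*} [Fintype V] [DecidableEq V]

lemma psub_posDef {M : Matrix V V ℝ} (hM : M.PosDef) (U : Finset V) :
    (psub M U).PosDef := by
  rw [Matrix.posDef_iff_dotProduct_mulVec]
  constructor
  · ext i j
    have := (congrFun (congrFun hM.1 j.1) i.1).symm
    simpa [psub, msub, Matrix.conjTranspose_apply] using this
  · intro x hx
    set y : V → ℝ := fun v => if h : v ∈ U then x ⟨v, h⟩ else 0 with hy
    have h1 : ∀ v : U, x v = y v.1 := fun v => by simp [hy, v.2]
    have hyne : y ≠ 0 := by
      intro h0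
      apply hx
      funext i
      have := congrFun h0 i.1
      simpa [hy, i.2] using this
    have key : (star x) ⬝ᵥ ((psub M U) *ᵥ x) = (star y) ⬝ᵥ (M *ᵥ y) := by
      calc (star x) ⬝ᵥ ((psub M U) *ᵥ x)
          = ∑ v : U, y v.1 * ∑ w : U, M v.1 w.1 * y w.1 := by
            simp only [dotProduct, Matrix.mulVec, dotProduct, Pi.star_apply, star_trivial]
            refine Finset.sum_congr rfl fun v _ => ?_
            rw [h1 v]
            congr 1
            refine Finset.sum_congr rfl fun w _ => ?_
            rw [h1 w]; rfl
        _ = ∑ v ∈ U, y v * ∑ w ∈ U, M v w * y w := by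
            rw [← Finset.sum_attach U (fun v => y v * ∑ w ∈ U, M v w * y w)]
            refine Finset.sum_congr rfl fun v _ => ?_
            congr 1
            rw [← Finset.sum_attach U (fun w => M v.1 w * y w)]
            rfl
        _ = ∑ v ∈ U, y v * ∑ w, M v w * y w := by
            refine Finset.sum_congr rfl fun v _ => ?_
            congr 1
            refine Finset.sum_subset (Finset.subset_univ U) fun w _ hw => ?_
            simp [hy, hw]
        _ = ∑ v, y v * ∑ w, M v w * y w := by
            refine Finset.sum_subset (Finset.subset_univ U) fun v _ hv => ?_
            simp [hy, hv]
        _ = (star y) ⬝ᵥ (M *ᵥ y) := by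
            simp only [dotProduct, Matrix.mulVec, dotProduct, Pi.star_apply, star_trivial]
    rw [key]
    exact hM.dotProduct_mulVec_pos hyne

lemma psub_det_pos {M : Matrix V V ℝ} (hM : M.PosDef) (U : Finset V) :
    0 < (psub M U).det :=
  (psub_posDef hM U).det_pos

lemma psub_isUnit_det {M : Matrix V V ℝ} (hM : M.PosDef) (U : Finset V) :
    IsUnit (psub M U).det :=
  isUnit_iff_ne_zero.mpr (psub_det_pos hM U).ne'

lemma det_psub_union (M : Matrix V V ℝ) {P Q : Finset V} (h : Disjoint P Q) :
    (psub M (P ∪ Q)).det =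
      (Matrix.fromBlocks (psub M P) (msub M P Q) (msub M Q P) (psub M Q)).det := by
  have : Matrix.fromBlocks (psub M P) (msub M P Q) (msub M Q P) (psub M Q) =
      (psub M (P ∪ Q)).submatrix (Equiv.Finset.union P Q h) (Equiv.Finset.union P Q h) := by
    ext i j
    cases i <;> cases j <;> rfl
  rw [this, Matrix.det_submatrix_equiv_self]

lemma det_split {M : Matrix V V ℝ} (hM : M.PosDef) {P Q : Finset V} (h : Disjoint P Q) :
    (psub M (P ∪ Q)).det =
      (psub M P).det * (psub M Q - msub M Q P * (psub M P)⁻¹ * msub M P Q).det := by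
  have : Invertible (psub M P) := Matrix.invertibleOfIsUnitDet _ (psub_isUnit_det hM P)
  rw [det_psub_union M h, Matrix.det_fromBlocks₁₁, invOf_eq_nonsing_inv]

end helpers

section main

variable {V : Type*} [Fintype V] [DecidableEq V]
variable {A S B : Finset V}

lemma sum3 (hAS : Disjoint A S) (hAB : Disjoint A B) (hSB : Disjoint S B)
    (hcover : A ∪ S ∪ B = Finset.univ) (f : V → ℝ) :
    ∑ v, f v = (∑ v ∈ A, f v) + (∑ v ∈ S, f v) + (∑ v ∈ B, f v) := by
  rw [← hcover, Finset.sum_union (by simp [Finset.disjoint_union_left, hAB, hSB]),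
      Finset.sum_union hAS]

lemma markov (hAS : Disjoint A S) (hAB : Disjoint A B) (hSB : Disjoint S B)
    (hcover : A ∪ S ∪ B = Finset.univ) {N : Matrix V V ℝ} (hN : N.PosDef)
    (hz : ∀ a ∈ A, ∀ b ∈ B, N⁻¹ a b = 0) :
    msub N A S * ((psub N S)⁻¹ * msub N S B) = msub N A B := by
  set K := N⁻¹ with hK
  have hKpd : K.PosDef := hN.inv
  have hKBunit : IsUnit (psub K B).det := psub_isUnit_det hKpd B
  have hSunit : IsUnit (psub N S).det := psub_isUnit_det hN S
  have hNK : N * K = 1 := Matrix.mul_nonsing_inv N (isUnit_iff_ne_zero.mpr hN.det_pos.ne')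
  have htot : ∀ u : V, ∀ b : B, u ≠ b.1 → ∑ v, N u v * K v b.1 = 0 := by
    intro u b hub
    have h1 : (N * K) u b.1 = (1 : Matrix V V ℝ) u b.1 := by rw [hNK]
    rw [Matrix.mul_apply, Matrix.one_apply_ne hub] at h1
    exact h1
  have hA0 : ∀ u : V, ∀ b : B, ∑ v ∈ A, N u v * K v b.1 = 0 := fun u b =>
    Finset.sum_eq_zero fun v hv => by rw [hz v hv b.1 b.2, mul_zero]
  have E1 : msub N A S * msub K S B + msub N A B * psub K B = 0 := by
    ext a b
    simp only [Matrix.add_apply, Matrix.zero_apply]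
    have e1 : (msub N A S * msub K S B) a b = ∑ v ∈ S, N a.1 v * K v b.1 := by
      rw [Matrix.mul_apply]
      exact Finset.sum_attach S (fun v => N a.1 v * K v b.1)
    have e2 : (msub N A B * psub K B) a b = ∑ v ∈ B, N a.1 v * K v b.1 := by
      rw [Matrix.mul_apply]
      exact Finset.sum_attach B (fun v => N a.1 v * K v b.1)
    have hne : a.1 ≠ b.1 := fun h => Finset.disjoint_left.mp hAB a.2 (h ▸ b.2)
    have := sum3 hAS hAB hSB hcover (fun v => N a.1 v * K v b.1)
    rw [htot a.1 b hne, hA0 a b] at this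
    rw [e1, e2]
    linarith
  have E2 : psub N S * msub K S B + msub N S B * psub K B = 0 := by
    ext s b
    simp only [Matrix.add_apply, Matrix.zero_apply]
    have e1 : (psub N S * msub K S B) s b = ∑ v ∈ S, N s.1 v * K v b.1 := by
      rw [Matrix.mul_apply]
      exact Finset.sum_attach S (fun v => N s.1 v * K v b.1)
    have e2 : (msub N S B * psub K B) s b = ∑ v ∈ B, N s.1 v * K v b.1 := by
      rw [Matrix.mul_apply]
      exact Finset.sum_attach B (fun v => N s.1 v * K v b.1)
    have hne : s.1 ≠ b.1 := fun h => Finset.disjoint_left.mp hSB s.2 (h ▸ b.2)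
    have := sum3 hAS hAB hSB hcover (fun v => N s.1 v * K v b.1)
    rw [htot s.1 b hne, hA0 s b] at this
    rw [e1, e2]
    linarith
  have hKSB : msub K S B = -((psub N S)⁻¹ * (msub N S B * psub K B)) := by
    have h2 : psub N S * msub K S B = -(msub N S B * psub K B) :=
      eq_neg_of_add_eq_zero_left E2
    rw [← Matrix.nonsing_inv_mul_cancel_left (psub N S) (msub K S B) hSunit, h2,
      Matrix.mul_neg]
  have h3 : msub N A B * psub K B =
      (msub N A S * ((psub N S)⁻¹ * msub N S B)) * psub K B := by
    have h1 : msub N A B * psub K B = -(msub N A S * msub K S B) :=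
      eq_neg_of_add_eq_zero_right E1
    rw [h1, hKSB]
    simp only [Matrix.mul_neg, neg_neg, Matrix.mul_assoc]
  calc msub N A S * ((psub N S)⁻¹ * msub N S B)
      = (msub N A S * ((psub N S)⁻¹ * msub N S B)) * psub K B * (psub K B)⁻¹ :=
        (Matrix.mul_nonsing_inv_cancel_right _ _ hKBunit).symm
    _ = msub N A B * psub K B * (psub K B)⁻¹ := by rw [← h3]
    _ = msub N A B := Matrix.mul_nonsing_inv_cancel_right _ _ hKBunit

lemma key_det (hAS : Disjoint A S) (hAB : Disjoint A B) (hSB : Disjoint S B)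
    (hcover : A ∪ S ∪ B = Finset.univ) {N : Matrix V V ℝ} (hN : N.PosDef)
    (hz : ∀ a ∈ A, ∀ b ∈ B, N⁻¹ a b = 0) :
    (psub N Finset.univ).det =
      (psub N (A ∪ S)).det *
        (psub N B - msub N B S * (psub N S)⁻¹ * msub N S B).det := by
  have hSunit : IsUnit (psub N S).det := psub_isUnit_det hN S
  set Y : Matrix S B ℝ := (psub N S)⁻¹ * msub N S B with hY
  set X' : V → B → ℝ := fun w b => if h : w ∈ S then Y ⟨w, h⟩ b else 0 with hX'
  set X : Matrix (A ∪ S : Finset V) B ℝ := Matrix.of fun v b => X' v.1 b with hXdef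
  have hYX : ∀ (w : S) (b : B), Y w b = X' w.1 b := by
    intro w b
    simp [hX', w.2]
  have hrow : ∀ (u : V) (b : B),
      ∀ (P : Finset V) (Z : Matrix P B ℝ) (hZ : ∀ w : P, Z w b = X' w.1 b),
      ∑ w ∈ P, N u w * X' w b = ∑ w : P, N u w.1 * Z w b := by
    intro u b P Z hZ
    rw [← Finset.sum_attach P (fun w => N u w * X' w b)]
    exact Finset.sum_congr rfl fun w _ => by rw [hZ w]
  have hsplit : ∀ (u : V) (b : B),
      ∑ w ∈ A ∪ S, N u w * X' w b = ∑ w ∈ S, N u w * X' w b := by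
    intro u b
    rw [Finset.sum_union hAS, Finset.sum_eq_zero (fun w hw => ?_), zero_add]
    have : w ∉ S := Finset.disjoint_left.mp hAS hw
    simp [hX', this]
  have happly : ∀ (v : (A ∪ S : Finset V)) (b : B),
      (psub N (A ∪ S) * X) v b = ∑ w ∈ S, N v.1 w * X' w b := by
    intro v b
    rw [Matrix.mul_apply, ← hsplit v.1 b]
    exact (hrow v.1 b (A ∪ S) X (fun w => rfl)).symm
  have hSY : psub N S * Y = msub N S B := by
    rw [hY, ← Matrix.mul_assoc, Matrix.mul_nonsing_inv _ hSunit, Matrix.one_mul]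
  have hmark : msub N A S * Y = msub N A B := markov hAS hAB hSB hcover hN hz
  have claim1 : psub N (A ∪ S) * X = msub N (A ∪ S) B := by
    ext v b
    rw [happly v b]
    rcases Finset.mem_union.mp v.2 with hv | hv
    · rw [hrow v.1 b S Y (fun w => hYX w b)]
      have : (msub N A S * Y) ⟨v.1, hv⟩ b = ∑ w : S, N v.1 w.1 * Y w b :=
        Matrix.mul_apply
      rw [← this, hmark]
      rfl
    · rw [hrow v.1 b S Y (fun w => hYX w b)]
      have : (psub N S * Y) ⟨v.1, hv⟩ b = ∑ w : S, N v.1 w.1 * Y w b :=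
        Matrix.mul_apply
      rw [← this, hSY]
      rfl
  have claim2 : msub N B (A ∪ S) * X = msub N B S * Y := by
    ext u b
    have h1 : (msub N B (A ∪ S) * X) u b = ∑ w ∈ A ∪ S, N u.1 w * X' w b := by
      rw [Matrix.mul_apply]
      exact (hrow u.1 b (A ∪ S) X (fun w => rfl)).symm
    have h2 : (msub N B S * Y) u b = ∑ w ∈ S, N u.1 w * X' w b := by
      rw [Matrix.mul_apply]
      exact (hrow u.1 b S Y (fun w => hYX w b)).symm
    rw [h1, h2, hsplit]
  have hASunit : IsUnit (psub N (A ∪ S)).det := psub_isUnit_det hN (A ∪ S)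
  have hXinv : (psub N (A ∪ S))⁻¹ * msub N (A ∪ S) B = X := by
    rw [← claim1, Matrix.nonsing_inv_mul_cancel_left _ _ hASunit]
  have hmid : msub N B (A ∪ S) * (psub N (A ∪ S))⁻¹ * msub N (A ∪ S) B =
      msub N B S * (psub N S)⁻¹ * msub N S B := by
    rw [Matrix.mul_assoc, hXinv, claim2, hY, Matrix.mul_assoc]
  have hdisj : Disjoint (A ∪ S) B := by
    simp [Finset.disjoint_union_left, hAB, hSB]
  calc (psub N Finset.univ).det
      = (psub N ((A ∪ S) ∪ B)).det := by rw [hcover]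
    _ = (psub N (A ∪ S)).det *
        (psub N B - msub N B (A ∪ S) * (psub N (A ∪ S))⁻¹ * msub N (A ∪ S) B).det :=
        det_split hN hdisj
    _ = (psub N (A ∪ S)).det *
        (psub N B - msub N B S * (psub N S)⁻¹ * msub N S B).det := by rw [hmid]

lemma schur_det_pos (hSB : Disjoint S B) {N : Matrix V V ℝ} (hN : N.PosDef) :
    0 < (psub N B - msub N B S * (psub N S)⁻¹ * msub N S B).det := by
  have h := det_split hN hSB
  have h1 := psub_det_pos hN (S ∪ B)
  have h2 := psub_det_pos hN S
  rw [h] at h1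
  nlinarith

lemma log_helper {a b c d : ℝ} (ha : 0 < a) (hb : 0 < b) (hc : 0 < c) (hd : 0 < d) :
    Real.log ((a * c) / (b * d)) = Real.log (a / b) + Real.log (d⁻¹ / c⁻¹) := by
  rw [show d⁻¹ / c⁻¹ = c / d by field_simp,
    show (a * c) / (b * d) = (a / b) * (c / d) by field_simp]
  exact Real.log_mul (div_pos ha hb).ne' (div_pos hc hd).ne'

end main

/-- Equation (4) in the proof of Theorem 1: for a partition `(A, S, B)` of `V` and
symmetric positive definite matrices `M, M⁽¹⁾, M⁽²⁾` whose inverses have zero `(A,B)`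
block, `λ(V) = λ(A ∪ S) + n₁ log(det K_B(M⁽¹⁾)/det K_B(M)) + n₂ log(det K_B(M⁽²⁾)/det K_B(M))`. -/
theorem stmt_3 {V : Type*} [Fintype V] [DecidableEq V]
    (A S B : Finset V) (hA : A.Nonempty) (hS : S.Nonempty) (hB : B.Nonempty)
    (hAS : Disjoint A S) (hAB : Disjoint A B) (hSB : Disjoint S B)
    (hcover : A ∪ S ∪ B = Finset.univ)
    (n₁ n₂ : ℝ) (hn₁ : 0 < n₁) (hn₂ : 0 < n₂)
    (M M₁ M₂ : Matrix V V ℝ)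
    (hMsym : M.IsSymm) (hM₁sym : M₁.IsSymm) (hM₂sym : M₂.IsSymm)
    (hM : M.PosDef) (hM₁ : M₁.PosDef) (hM₂ : M₂.PosDef)
    (hzM : ∀ a ∈ A, ∀ b ∈ B, M⁻¹ a b = 0)
    (hzM₁ : ∀ a ∈ A, ∀ b ∈ B, M₁⁻¹ a b = 0)
    (hzM₂ : ∀ a ∈ A, ∀ b ∈ B, M₂⁻¹ a b = 0) :
    lam n₁ n₂ M M₁ M₂ Finset.univ =
      lam n₁ n₂ M M₁ M₂ (A ∪ S) +
        n₁ * Real.log ((KB M₁ B S).det / (KB M B S).det) +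
        n₂ * Real.log ((KB M₂ B S).det / (KB M B S).det) := by
  have kM := key_det hAS hAB hSB hcover hM hzM
  have kM₁ := key_det hAS hAB hSB hcover hM₁ hzM₁
  have kM₂ := key_det hAS hAB hSB hcover hM₂ hzM₂
  have cM := schur_det_pos hSB hM
  have cM₁ := schur_det_pos hSB hM₁
  have cM₂ := schur_det_pos hSB hM₂
  have dM := psub_det_pos hM (A ∪ S)
  have dM₁ := psub_det_pos hM₁ (A ∪ S)
  have dM₂ := psub_det_pos hM₂ (A ∪ S)
  have hKB : ∀ N : Matrix V V ℝ, (KB N B S).det =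
      (psub N B - msub N B S * (psub N S)⁻¹ * msub N S B).det⁻¹ := by
    intro N
    rw [KB, Matrix.det_nonsing_inv, Ring.inverse_eq_inv']
  simp only [lam, kM, kM₁, kM₂, hKB]
  rw [log_helper dM dM₁ cM cM₁, log_helper dM dM₂ cM cM₂]
  ring
end

section
/- Let V be a finite index set and (A, S, B) a partition of V with A, S, B nonempty. Let μ ∈ ℝ^V and let Σ be a symmetric positive definite V×V real matrix whose inverse has zero (A,B) block, i.e. (Σ⁻¹)_{a b} = 0 for all a ∈ A, b ∈ B. Then for every x ∈ ℝ^V, f(x; μ, Σ) = f(x_{A∪S}; μ_{A∪S}, Σ_{A∪S}) · f(x_B; μ_B + Σ_{B,S} Σ_S⁻¹ (x_S − μ_S), Σ_B − Σ_{B,S} Σ_S⁻¹ Σ_{S,B}). That is, the joint Gaussian density factorizes into the marginal density on A ∪ S times the conditional density of the B-coordinates given only the S-coordinates. -/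
open Matrix

/-- The Gaussian density
`f(x; μ, Σ) = (2π)^(−|I|/2) (det Σ)^(−1/2) exp(−(1/2)(x−μ)ᵀ Σ⁻¹ (x−μ))`. -/
noncomputable def gauss {I : Type*} [Fintype I] [DecidableEq I]
    (μ : I → ℝ) (S : Matrix I I ℝ) (x : I → ℝ) : ℝ :=
  (2 * Real.pi) ^ (-(Fintype.card I : ℝ) / 2) * S.det ^ (-(1 : ℝ) / 2) *
    Real.exp (-(1 / 2 : ℝ) * ((x - μ) ⬝ᵥ (S⁻¹ *ᵥ (x - μ))))

/-- Sub-vector of `x` indexed by the finset `A`. -/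
def rest {V : Type*} (x : V → ℝ) (A : Finset V) : A → ℝ := fun a => x a.1

lemma dotT {m n : Type*} [Fintype m] [Fintype n] (M : Matrix m n ℝ) (u : m → ℝ) (v : n → ℝ) :
    u ⬝ᵥ M *ᵥ v = v ⬝ᵥ Mᵀ *ᵥ u := by
  rw [dotProduct_mulVec, ← mulVec_transpose, dotProduct_comm]

lemma PosDef.submatrix_inj {m n : Type*} [Fintype m] [Fintype n] [DecidableEq m] [DecidableEq n]
    {M : Matrix n n ℝ} (hM : M.PosDef) (e : m → n) (he : Function.Injective e) :
    (M.submatrix e e).PosDef := by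
  refine Matrix.PosDef.of_dotProduct_mulVec_pos ?_ ?_
  · have h1 := hM.1
    unfold Matrix.IsHermitian at *
    rw [conjTranspose_submatrix, h1]
  · intro x hx
    set y : n → ℝ := fun v => ∑ i, if e i = v then x i else 0 with hy
    have key : ∀ f : n → ℝ, ∑ v, y v * f v = ∑ i, x i * f (e i) := by
      intro f
      simp only [hy, Finset.sum_mul, ite_mul, zero_mul]
      rw [Finset.sum_comm]
      congr 1; ext i
      simp
    have hyi : ∀ i, y (e i) = x i := by
      intro i
      simp only [hy]
      rw [Finset.sum_eq_single i]
      · simp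
      · intro j _ hj
        rw [if_neg (fun h => hj (he h))]
      · simp
    have hy0 : y ≠ 0 := by
      intro h
      apply hx
      ext i
      have := congrFun h (e i)
      rw [hyi i] at this
      simpa using this
    have h2 := hM.dotProduct_mulVec_pos hy0
    simp only [star_trivial] at h2 ⊢
    convert h2 using 1
    show ∑ i, x i * (M.submatrix e e *ᵥ x) i = ∑ v, y v * (M *ᵥ y) v
    rw [key (fun v => (M *ᵥ y) v)]
    apply Finset.sum_congr rfl
    intro i _
    congr 1
    show ∑ j, M (e i) (e j) * x j = ∑ u, M (e i) u * y u
    calc ∑ j, M (e i) (e j) * x j = ∑ j, x j * M (e i) (e j) := by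
          apply Finset.sum_congr rfl; intros; ring
      _ = ∑ u, y u * M (e i) u := (key (fun u => M (e i) u)).symm
      _ = ∑ u, M (e i) u * y u := by apply Finset.sum_congr rfl; intros; ring

lemma gauss_reindex {m n : Type*} [Fintype m] [Fintype n] [DecidableEq m] [DecidableEq n]
    (e : m ≃ n) (μ : n → ℝ) (M : Matrix n n ℝ) (x : n → ℝ) :
    gauss μ M x = gauss (μ ∘ e) (M.submatrix e e) (x ∘ e) := by
  unfold gauss
  rw [Fintype.card_congr e, det_submatrix_equiv_self]
  congr 2
  rw [inv_submatrix_equiv]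
  have hsub : (x ∘ e - μ ∘ e) = (x - μ) ∘ e := rfl
  rw [hsub, submatrix_mulVec_equiv]
  have : ((x - μ) ∘ e) ∘ e.symm = (x - μ) := by
    ext i; simp
  rw [this]
  congr 1
  show (x - μ) ⬝ᵥ M⁻¹ *ᵥ (x - μ) = ((x - μ) ∘ e) ⬝ᵥ ((M⁻¹ *ᵥ (x - μ)) ∘ e)
  unfold dotProduct
  exact (Equiv.sum_comp e fun i => (x - μ) i * (M⁻¹ *ᵥ (x - μ)) i).symm

lemma gauss_fromBlocks {m n : Type*} [Fintype m] [Fintype n] [DecidableEq m] [DecidableEq n]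
    (P : Matrix m m ℝ) (Q : Matrix m n ℝ) (T : Matrix n n ℝ)
    (hPs : Pᵀ = P) (hTs : Tᵀ = T)
    (hM : (fromBlocks P Q Qᵀ T).PosDef)
    (μ₁ x₁ : m → ℝ) (μ₂ x₂ : n → ℝ) :
    gauss (Sum.elim μ₁ μ₂) (fromBlocks P Q Qᵀ T) (Sum.elim x₁ x₂)
      = gauss μ₁ P x₁ * gauss (μ₂ + (Qᵀ * P⁻¹) *ᵥ (x₁ - μ₁)) (T - Qᵀ * P⁻¹ * Q) x₂ := by
  have hP : P.PosDef := by
    have h := PosDef.submatrix_inj hM Sum.inl Sum.inl_injective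
    have : P = (fromBlocks P Q Qᵀ T).submatrix Sum.inl Sum.inl := by ext i j; rfl
    rw [this]; exact h
  haveI : Invertible P := invertibleOfIsUnitDet P (isUnit_iff_ne_zero.mpr hP.det_pos.ne')
  set D := T - Qᵀ * P⁻¹ * Q with hD
  have hdetM : (fromBlocks P Q Qᵀ T).det = P.det * D.det := by
    rw [det_fromBlocks₁₁, invOf_eq_nonsing_inv]
  have hdetD : 0 < D.det := by
    have h1 := hM.det_pos
    rw [hdetM] at h1
    nlinarith [hP.det_pos, h1]
  haveI : Invertible D := invertibleOfIsUnitDet D (isUnit_iff_ne_zero.mpr hdetD.ne')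
  haveI : Invertible (T - Qᵀ * ⅟P * Q) := by rw [invOf_eq_nonsing_inv]; infer_instance
  haveI : Invertible (fromBlocks P Q Qᵀ T) :=
    invertibleOfIsUnitDet _ (isUnit_iff_ne_zero.mpr hM.det_pos.ne')
  have hMinv : (fromBlocks P Q Qᵀ T)⁻¹ =
      fromBlocks (P⁻¹ + P⁻¹ * Q * D⁻¹ * Qᵀ * P⁻¹) (-(P⁻¹ * Q * D⁻¹))
        (-(D⁻¹ * Qᵀ * P⁻¹)) D⁻¹ := by
    rw [← invOf_eq_nonsing_inv, invOf_fromBlocks₁₁_eq]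
    simp only [invOf_eq_nonsing_inv]
    rfl
  have hPinv : P⁻¹ᵀ = P⁻¹ := by rw [transpose_nonsing_inv, hPs]
  have hDs : Dᵀ = D := by
    rw [hD, transpose_sub, hTs, transpose_mul, transpose_mul, hPinv, transpose_transpose,
      Matrix.mul_assoc]
  have hDinv : D⁻¹ᵀ = D⁻¹ := by rw [transpose_nonsing_inv, hDs]
  set v₁ := x₁ - μ₁ with hv₁
  set v₂ := x₂ - μ₂ with hv₂
  set a := (Qᵀ * P⁻¹) *ᵥ v₁ with ha
  have hsub : (Sum.elim x₁ x₂ - Sum.elim μ₁ μ₂) = Sum.elim v₁ v₂ := by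
    funext i; cases i <;> simp [hv₁, hv₂]
  have hsub2 : x₂ - (μ₂ + a) = v₂ - a := by
    funext i; simp [hv₂]; ring
  have t1 : v₁ ⬝ᵥ (P⁻¹ * Q * D⁻¹ * Qᵀ * P⁻¹) *ᵥ v₁ = a ⬝ᵥ D⁻¹ *ᵥ a := by
    have hrw : P⁻¹ * Q * D⁻¹ * Qᵀ * P⁻¹ = (Qᵀ * P⁻¹)ᵀ * (D⁻¹ * (Qᵀ * P⁻¹)) := by
      rw [transpose_mul, hPinv, transpose_transpose]
      simp [Matrix.mul_assoc]
    rw [hrw, ← mulVec_mulVec, dotT, transpose_transpose, ← mulVec_mulVec, ← ha,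
      dotProduct_comm]
  have t2 : v₁ ⬝ᵥ (P⁻¹ * Q * D⁻¹) *ᵥ v₂ = a ⬝ᵥ D⁻¹ *ᵥ v₂ := by
    have hrw : P⁻¹ * Q * D⁻¹ = (Qᵀ * P⁻¹)ᵀ * D⁻¹ := by
      rw [transpose_mul, hPinv, transpose_transpose]
    rw [hrw, ← mulVec_mulVec, dotT, transpose_transpose, ← ha, dotProduct_comm]
  have t3 : v₂ ⬝ᵥ (D⁻¹ * Qᵀ * P⁻¹) *ᵥ v₁ = a ⬝ᵥ D⁻¹ *ᵥ v₂ := by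
    rw [Matrix.mul_assoc, ← mulVec_mulVec, ← ha, dotT, hDinv]
  have quad : (Sum.elim v₁ v₂) ⬝ᵥ ((fromBlocks P Q Qᵀ T)⁻¹ *ᵥ (Sum.elim v₁ v₂))
      = v₁ ⬝ᵥ P⁻¹ *ᵥ v₁ + (v₂ - a) ⬝ᵥ D⁻¹ *ᵥ (v₂ - a) := by
    have t4 : v₂ ⬝ᵥ D⁻¹ *ᵥ a = a ⬝ᵥ D⁻¹ *ᵥ v₂ := by rw [dotT, hDinv]
    rw [hMinv, fromBlocks_mulVec, sumElim_dotProduct_sumElim]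
    simp only [Sum.elim_comp_inl, Sum.elim_comp_inr, add_mulVec, neg_mulVec, mulVec_sub,
      dotProduct_add, dotProduct_neg, dotProduct_sub, sub_dotProduct]
    linarith [t1, t2, t3, t4]
  unfold gauss
  rw [hdetM, hsub, quad, hsub2]
  rw [Real.mul_rpow hP.det_pos.le hdetD.le]
  rw [show Fintype.card (m ⊕ n) = Fintype.card m + Fintype.card n from Fintype.card_sum]
  rw [show (-(↑(Fintype.card m + Fintype.card n) : ℝ) / 2)
      = -(Fintype.card m : ℝ) / 2 + -(Fintype.card n : ℝ) / 2 by push_cast; ring]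
  rw [Real.rpow_add (by positivity)]
  rw [show -(1/2 : ℝ) * (v₁ ⬝ᵥ P⁻¹ *ᵥ v₁ + (v₂ - a) ⬝ᵥ D⁻¹ *ᵥ (v₂ - a))
      = -(1/2 : ℝ) * (v₁ ⬝ᵥ P⁻¹ *ᵥ v₁) + -(1/2 : ℝ) * ((v₂ - a) ⬝ᵥ D⁻¹ *ᵥ (v₂ - a)) by ring]
  rw [Real.exp_add]
  ring

lemma sum_split {V : Type*} [Fintype V] [DecidableEq V] (C B : Finset V)
    (hd : Disjoint C B) (hu : C ∪ B = Finset.univ) (f : V → ℝ) :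
    ∑ v, f v = ∑ c : C, f c + ∑ b : B, f b := by
  rw [Finset.sum_coe_sort C f, Finset.sum_coe_sort B f, ← Finset.sum_union hd, hu]

lemma sum_union_subtype {V : Type*} [DecidableEq V] (A S : Finset V)
    (hd : Disjoint A S) (f : ↥(A ∪ S) → ℝ) :
    ∑ c : ↥(A ∪ S), f c =
      (∑ a : ↥A, f ⟨a.1, Finset.mem_union_left _ a.2⟩) +
        ∑ s : ↥S, f ⟨s.1, Finset.mem_union_right _ s.2⟩ := by
  classical
  set g : V → ℝ := fun v => if h : v ∈ A ∪ S then f ⟨v, h⟩ else 0 with hg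
  have h1 : ∑ c : ↥(A ∪ S), f c = ∑ v ∈ A ∪ S, g v := by
    rw [← Finset.sum_attach (A ∪ S) g, Finset.univ_eq_attach]
    apply Finset.sum_congr rfl
    intro c _
    simp only [hg, dif_pos c.2]
  have h2 : ∑ v ∈ A, g v = ∑ a : ↥A, f ⟨a.1, Finset.mem_union_left _ a.2⟩ := by
    rw [← Finset.sum_attach A (fun v => g v), Finset.univ_eq_attach]
    apply Finset.sum_congr rfl
    intro a _
    simp only [hg, dif_pos (Finset.mem_union_left S a.2)]
  have h3 : ∑ v ∈ S, g v = ∑ s : ↥S, f ⟨s.1, Finset.mem_union_right _ s.2⟩ := by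
    rw [← Finset.sum_attach S (fun v => g v), Finset.univ_eq_attach]
    apply Finset.sum_congr rfl
    intro s _
    simp only [hg, dif_pos (Finset.mem_union_right A s.2)]
  rw [h1, Finset.sum_union hd, h2, h3]

/-- For a partition `(A, S, B)` of `V` with `A, S, B` nonempty and `Σ` symmetric positive
definite whose inverse has zero `(A,B)` block, the joint Gaussian density factorizes as
`f(x; μ, Σ) = f(x_{A∪S}; μ_{A∪S}, Σ_{A∪S}) · f(x_B; μ_B + Σ_{B,S} Σ_S⁻¹ (x_S − μ_S),
Σ_B − Σ_{B,S} Σ_S⁻¹ Σ_{S,B})`: the marginal density on `A ∪ S` times the conditional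
density of the `B`-coordinates given only the `S`-coordinates. -/
theorem stmt_5 {V : Type*} [Fintype V] [DecidableEq V]
    (A S B : Finset V) (hA : A.Nonempty) (hS : S.Nonempty) (hB : B.Nonempty)
    (hAS : Disjoint A S) (hAB : Disjoint A B) (hSB : Disjoint S B)
    (hcover : A ∪ S ∪ B = Finset.univ)
    (μ : V → ℝ) (Sg : Matrix V V ℝ) (hsym : Sg.IsSymm) (hpd : Sg.PosDef)
    (hzero : ∀ a ∈ A, ∀ b ∈ B, Sg⁻¹ a b = 0) :
    ∀ x : V → ℝ,
      gauss μ Sg x =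
        gauss (rest μ (A ∪ S)) (psub Sg (A ∪ S)) (rest x (A ∪ S)) *
          gauss (rest μ B + (msub Sg B S * (psub Sg S)⁻¹) *ᵥ (rest x S - rest μ S))
            (psub Sg B - msub Sg B S * (psub Sg S)⁻¹ * msub Sg S B) (rest x B) := by
  intro x
  set C : Finset V := A ∪ S with hC
  have hCB : Disjoint C B := Finset.disjoint_union_left.mpr ⟨hAB, hSB⟩
  have hCu : C ∪ B = Finset.univ := hcover
  -- the equivalence
  have hbij : Function.Bijective (Sum.elim (Subtype.val : C → V) (Subtype.val : B → V)) := by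
    constructor
    · rintro (⟨c, hc⟩ | ⟨b, hb⟩) (⟨c', hc'⟩ | ⟨b', hb'⟩) h
      · exact congrArg Sum.inl (Subtype.ext (by simpa using h))
      · have h' : c = b' := by simpa using h
        exact absurd hb' (Finset.disjoint_left.mp hCB (h' ▸ hc))
      · have h' : b = c' := by simpa using h
        exact absurd (h' ▸ hb) (Finset.disjoint_left.mp hCB hc')
      · exact congrArg Sum.inr (Subtype.ext (by simpa using h))
    · intro v
      have hv : v ∈ C ∪ B := hCu ▸ Finset.mem_univ v
      rcases Finset.mem_union.mp hv with h | h
      · exact ⟨Sum.inl ⟨v, h⟩, rfl⟩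
      · exact ⟨Sum.inr ⟨v, h⟩, rfl⟩
  set e : (↥C ⊕ ↥B) ≃ V := Equiv.ofBijective _ hbij with he
  have heapp : ∀ i, e i = Sum.elim (Subtype.val : C → V) (Subtype.val : B → V) i := fun i => rfl
  have hQT : (msub Sg C B)ᵀ = msub Sg B C := by
    ext b c
    exact hsym.apply b.1 c.1
  have hsubm : Sg.submatrix e e
      = fromBlocks (psub Sg C) (msub Sg C B) (msub Sg C B)ᵀ (psub Sg B) := by
    ext i j
    cases i <;> cases j <;>
      simp only [submatrix_apply, heapp, Sum.elim_inl, Sum.elim_inr, fromBlocks_apply₁₁,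
        fromBlocks_apply₁₂, fromBlocks_apply₂₁, fromBlocks_apply₂₂, hQT] <;> rfl
  have hμe : μ ∘ e = Sum.elim (rest μ C) (rest μ B) := by
    funext i; cases i <;> rfl
  have hxe : x ∘ e = Sum.elim (rest x C) (rest x B) := by
    funext i; cases i <;> rfl
  have hPs : (psub Sg C)ᵀ = psub Sg C := by
    ext c c'
    exact hsym.apply c.1 c'.1
  have hTs : (psub Sg B)ᵀ = psub Sg B := by
    ext b b'
    exact hsym.apply b.1 b'.1
  have hMpd : (fromBlocks (psub Sg C) (msub Sg C B) (msub Sg C B)ᵀ (psub Sg B)).PosDef := by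
    rw [← hsubm]
    exact PosDef.submatrix_inj hpd e e.injective
  have step0 := gauss_reindex e μ Sg x
  rw [hsubm, hμe, hxe] at step0
  rw [step0, gauss_fromBlocks (psub Sg C) (msub Sg C B) (psub Sg B) hPs hTs hMpd, hQT]
  -- Now handle the conditional parameters via the zero block condition
  set K := Sg⁻¹ with hK
  have hKsym : ∀ v w, K v w = K w v := by
    intro v w
    have h : Kᵀ = K := by
      rw [hK, transpose_nonsing_inv, hsym.eq]
    exact Matrix.IsSymm.apply h w v
  have hKBA : ∀ b ∈ B, ∀ a ∈ A, K b a = 0 := fun b hb a ha => by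
    rw [hKsym]; exact hzero a ha b hb
  have hSgK : Sg * K = 1 := Matrix.mul_nonsing_inv Sg (isUnit_iff_ne_zero.mpr hpd.det_pos.ne')
  have hCpd : (psub Sg C).PosDef := PosDef.submatrix_inj hpd _ Subtype.val_injective
  have hSpd : (psub Sg S).PosDef := PosDef.submatrix_inj hpd _ Subtype.val_injective
  haveI : Invertible (psub Sg C) :=
    invertibleOfIsUnitDet _ (isUnit_iff_ne_zero.mpr hCpd.det_pos.ne')
  haveI : Invertible (psub Sg S) :=
    invertibleOfIsUnitDet _ (isUnit_iff_ne_zero.mpr hSpd.det_pos.ne')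
  set N := msub Sg B C * (psub Sg C)⁻¹ with hN
  have hNP : N * psub Sg C = msub Sg B C := by
    rw [hN, Matrix.mul_assoc, Matrix.nonsing_inv_mul _
      (isUnit_iff_ne_zero.mpr hCpd.det_pos.ne'), Matrix.mul_one]
  set L : Matrix ↥C ↥A ℝ := fun c a => K c.1 a.1 with hL
  set J : Matrix ↥C ↥A ℝ := fun c a => if c.1 = a.1 then (1 : ℝ) else 0 with hJ
  have step1 : psub Sg C * L = J := by
    ext c a
    have hsplit := sum_split C B hCB hCu (fun v => Sg c.1 v * K v a.1)
    have hBzero : ∑ b : ↥B, Sg c.1 b.1 * K b.1 a.1 = 0 :=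
      Finset.sum_eq_zero fun b _ => by rw [hKBA b.1 b.2 a.1 a.2, mul_zero]
    rw [hBzero, add_zero] at hsplit
    have htot : ∑ v, Sg c.1 v * K v a.1 = J c a := by
      have h1 := congrFun (congrFun hSgK c.1) a.1
      rw [Matrix.mul_apply] at h1
      rw [h1, Matrix.one_apply, hJ]
    have goalform : (psub Sg C * L) c a = ∑ c' : ↥C, Sg c.1 c'.1 * K c'.1 a.1 := by
      rw [Matrix.mul_apply]; rfl
    rw [goalform, ← hsplit, htot]
  have step2 : msub Sg B C * L = 0 := by
    ext b a
    have hsplit := sum_split C B hCB hCu (fun v => Sg b.1 v * K v a.1)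
    have hBzero : ∑ b' : ↥B, Sg b.1 b'.1 * K b'.1 a.1 = 0 :=
      Finset.sum_eq_zero fun b' _ => by rw [hKBA b'.1 b'.2 a.1 a.2, mul_zero]
    rw [hBzero, add_zero] at hsplit
    have htot : ∑ v, Sg b.1 v * K v a.1 = 0 := by
      have h1 := congrFun (congrFun hSgK b.1) a.1
      rw [Matrix.mul_apply] at h1
      rw [h1, Matrix.one_apply_ne]
      intro h
      exact (Finset.disjoint_left.mp hAB a.2) (h ▸ b.2)
    have goalform : (msub Sg B C * L) b a = ∑ c' : ↥C, Sg b.1 c'.1 * K c'.1 a.1 := by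
      rw [Matrix.mul_apply]; rfl
    show (msub Sg B C * L) b a = 0
    rw [goalform, ← hsplit, htot]
  have claim1 : ∀ (b : ↥B) (a : ↥A), N b ⟨a.1, Finset.mem_union_left _ a.2⟩ = 0 := by
    have hNJ : N * J = 0 := by
      rw [← step1, ← Matrix.mul_assoc, hNP, step2]
    intro b a
    have h := congrFun (congrFun hNJ b) a
    rw [Matrix.mul_apply] at h
    rw [Finset.sum_eq_single (⟨a.1, Finset.mem_union_left _ a.2⟩ : ↥C)] at h
    · simpa [hJ] using h
    · intro c _ hc
      have hne : c.1 ≠ a.1 := fun hh => hc (Subtype.ext hh)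
      simp [hJ, hne]
    · intro hmem
      exact absurd (Finset.mem_univ _) hmem
  set Nt : Matrix ↥B ↥S ℝ := fun b s => N b ⟨s.1, Finset.mem_union_right _ s.2⟩ with hNt
  have hNtP : Nt * psub Sg S = msub Sg B S := by
    ext b s
    have h := congrFun (congrFun hNP b) ⟨s.1, Finset.mem_union_right _ s.2⟩
    rw [Matrix.mul_apply] at h
    rw [sum_union_subtype A S hAS
      (fun c => N b c * psub Sg C c ⟨s.1, Finset.mem_union_right _ s.2⟩)] at h
    have hz : (∑ a : ↥A, N b ⟨a.1, Finset.mem_union_left _ a.2⟩ *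
        psub Sg C ⟨a.1, Finset.mem_union_left _ a.2⟩ ⟨s.1, Finset.mem_union_right _ s.2⟩) = 0 :=
      Finset.sum_eq_zero fun a _ => by rw [claim1 b a, zero_mul]
    rw [hz, zero_add] at h
    rw [Matrix.mul_apply]
    exact h
  have claim2 : Nt = msub Sg B S * (psub Sg S)⁻¹ := by
    rw [← hNtP]
    exact (Matrix.mul_inv_cancel_right_of_invertible (A := psub Sg S) Nt).symm
  have keya : N *ᵥ (rest x C - rest μ C)
      = (msub Sg B S * (psub Sg S)⁻¹) *ᵥ (rest x S - rest μ S) := by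
    funext b
    rw [← claim2]
    show ∑ c : ↥C, N b c * (rest x C - rest μ C) c = ∑ s : ↥S, Nt b s * (rest x S - rest μ S) s
    rw [sum_union_subtype A S hAS (fun c => N b c * (rest x C - rest μ C) c)]
    have hz : (∑ a : ↥A, N b ⟨a.1, Finset.mem_union_left _ a.2⟩ *
        (rest x C - rest μ C) ⟨a.1, Finset.mem_union_left _ a.2⟩) = 0 :=
      Finset.sum_eq_zero fun a _ => by rw [claim1 b a, zero_mul]
    rw [hz, zero_add]
    rfl
  have keyb : psub Sg B - N * msub Sg C B
      = psub Sg B - msub Sg B S * (psub Sg S)⁻¹ * msub Sg S B := by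
    have hmul : N * msub Sg C B = msub Sg B S * (psub Sg S)⁻¹ * msub Sg S B := by
      rw [← claim2]
      ext b b'
      rw [Matrix.mul_apply, Matrix.mul_apply]
      rw [sum_union_subtype A S hAS (fun c => N b c * msub Sg C B c b')]
      have hz : (∑ a : ↥A, N b ⟨a.1, Finset.mem_union_left _ a.2⟩ *
          msub Sg C B ⟨a.1, Finset.mem_union_left _ a.2⟩ b') = 0 :=
        Finset.sum_eq_zero fun a _ => by rw [claim1 b a, zero_mul]
      rw [hz, zero_add]
      rfl
    rw [hmul]
  rw [keya, keyb]
end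

section
/- Let V be a finite index set and let (μ⁽¹⁾, Σ⁽¹⁾), (μ⁽²⁾, Σ⁽²⁾) be two pairs of mean vectors and symmetric positive definite covariance matrices indexed by V. If D ⊆ V is a seed set for the two pairs and D ⊆ D' ⊆ V, then D' is also a seed set for the two pairs. -/
open Matrix

section Aux

variable {V : Type*} [Fintype V] [DecidableEq V]

lemma posDef_submatrix_of_injective {m n : Type*} [Fintype m] [Fintype n]
    [DecidableEq m] [DecidableEq n] {M : Matrix n n ℝ} (hM : M.PosDef)
    {f : m → n} (hf : Function.Injective f) : (M.submatrix f f).PosDef := by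
  refine posDef_iff_dotProduct_mulVec.2 ⟨hM.1.submatrix f, fun x hx => ?_⟩
  set y : n → ℝ := fun v => ∑ i, if f i = v then x i else 0 with hy
  have hyf : ∀ i, y (f i) = x i := by
    intro i
    show (∑ j, if f j = f i then x j else 0) = x i
    rw [Finset.sum_eq_single i]
    · simp
    · intro j _ hj
      have : f j ≠ f i := fun h => hj (hf h)
      simp [this]
    · simp
  have hy0 : ∀ v, v ∉ Finset.univ.image f → y v = 0 := by
    intro v hv
    show (∑ i, if f i = v then x i else 0) = 0
    apply Finset.sum_eq_zero
    intro i _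
    have : f i ≠ v := fun h => hv (Finset.mem_image.2 ⟨i, Finset.mem_univ _, h⟩)
    simp [this]
  have hyne : y ≠ 0 := by
    obtain ⟨i, hi⟩ := Function.ne_iff.1 hx
    intro h
    exact hi (by rw [← hyf i, h]; rfl)
  have inner : ∀ v, (∑ w, M v w * y w) = ∑ j, M v (f j) * x j := fun v => by
    calc ∑ w, M v w * y w
        = ∑ w ∈ Finset.univ.image f, M v w * y w :=
          (Finset.sum_subset (Finset.subset_univ _)
            (fun w _ hw => by rw [hy0 w hw, mul_zero])).symm
      _ = ∑ j, M v (f j) * y (f j) :=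
          Finset.sum_image (f := fun w => M v w * y w) (g := f) (fun a _ b _ h => hf h)
      _ = ∑ j, M v (f j) * x j := by simp [hyf]
  have key : star x ⬝ᵥ (M.submatrix f f) *ᵥ x = star y ⬝ᵥ M *ᵥ y := by
    simp only [star_trivial, dotProduct, mulVec, submatrix_apply]
    calc ∑ i, x i * ∑ j, M (f i) (f j) * x j
        = ∑ i, y (f i) * ∑ w, M (f i) w * y w := by simp [hyf, inner]
      _ = ∑ v ∈ Finset.univ.image f, y v * ∑ w, M v w * y w :=
          (Finset.sum_image (f := fun v => y v * ∑ w, M v w * y w) (g := f)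
            (fun a _ b _ h => hf h)).symm
      _ = ∑ v, y v * ∑ w, M v w * y w :=
          Finset.sum_subset (Finset.subset_univ _)
            (fun v _ hv => by rw [hy0 v hv, zero_mul])
  rw [key]
  exact hM.dotProduct_mulVec_pos hyne

/-- The canonical equivalence `↥D ⊕ ↥Dᶜ ≃ V`. -/
def blockEquiv (D : Finset V) : (↥D ⊕ ↥(Dᶜ : Finset V)) ≃ V where
  toFun := Sum.elim Subtype.val Subtype.val
  invFun x := if h : x ∈ D then Sum.inl ⟨x, h⟩ else Sum.inr ⟨x, Finset.mem_compl.2 h⟩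
  left_inv := by
    rintro (⟨x, hx⟩ | ⟨x, hx⟩)
    · simp [hx]
    · have : x ∉ D := Finset.mem_compl.1 hx
      simp [this]
  right_inv := by
    intro x
    by_cases h : x ∈ D <;> simp [h]

lemma submatrix_blockEquiv (M : Matrix V V ℝ) (D : Finset V) :
    M.submatrix (blockEquiv D) (blockEquiv D) =
      fromBlocks (psub M D) (msub M D Dᶜ) (msub M Dᶜ D) (psub M Dᶜ) := by
  ext i j
  cases i <;> cases j <;> rfl

lemma comp_blockEquiv (μ : V → ℝ) (D : Finset V) :
    μ ∘ (blockEquiv D) = Sum.elim (rest μ D) (rest μ Dᶜ) := by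
  funext i; cases i <;> rfl

end Aux

noncomputable def condParams {V : Type*} [Fintype V] [DecidableEq V]
    (μ : V → ℝ) (Sg : Matrix V V ℝ) (B S : Finset V) :
    (B → ℝ) × Matrix B S ℝ × Matrix B B ℝ :=
  (rest μ B - (msub Sg B S * (psub Sg S)⁻¹) *ᵥ rest μ S,
   msub Sg B S * (psub Sg S)⁻¹,
   psub Sg B - msub Sg B S * (psub Sg S)⁻¹ * msub Sg S B)

section Master

variable {V : Type*} [Fintype V] [DecidableEq V]

lemma condParams_eq_precision (μ : V → ℝ) (Sg : Matrix V V ℝ)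
    (hpd : Sg.PosDef) (D : Finset V) :
    condParams μ Sg Dᶜ D =
      ((psub Sg⁻¹ Dᶜ)⁻¹ *ᵥ rest (Sg⁻¹ *ᵥ μ) Dᶜ,
       -((psub Sg⁻¹ Dᶜ)⁻¹ * msub Sg⁻¹ Dᶜ D),
       (psub Sg⁻¹ Dᶜ)⁻¹) := by
  set e := blockEquiv D with he
  set A := psub Sg D with hA'
  set B := msub Sg D Dᶜ with hB'
  set C := msub Sg Dᶜ D with hC'
  set E := psub Sg Dᶜ with hE'
  have hA : A.PosDef := posDef_submatrix_of_injective hpd Subtype.val_injective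
  haveI : Invertible A := invertibleOfIsUnitDet A (isUnit_iff_ne_zero.2 hA.det_pos.ne')
  have hP : (Sg.submatrix e e).PosDef := posDef_submatrix_of_injective hpd e.injective
  have hPblocks : Sg.submatrix e e = fromBlocks A B C E := submatrix_blockEquiv Sg D
  have hdetP : (fromBlocks A B C E).det ≠ 0 := hPblocks ▸ hP.det_pos.ne'
  rw [det_fromBlocks₁₁] at hdetP
  have hdetS : (E - C * ⅟A * B).det ≠ 0 := fun h => hdetP (by rw [h, mul_zero])
  haveI : Invertible (E - C * ⅟A * B) := invertibleOfIsUnitDet _ (isUnit_iff_ne_zero.2 hdetS)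
  haveI : Invertible (fromBlocks A B C E) := fromBlocks₁₁Invertible A B C E
  set S := E - C * ⅟A * B with hS'
  have hKinv : Sg⁻¹.submatrix e e =
      fromBlocks (⅟A + ⅟A * B * ⅟S * C * ⅟A) (-(⅟A * B * ⅟S)) (-(⅟S * C * ⅟A)) ⅟S := by
    rw [← inv_submatrix_equiv Sg e e, hPblocks, ← invOf_eq_nonsing_inv,
      invOf_fromBlocks₁₁_eq]
  rw [submatrix_blockEquiv Sg⁻¹ D] at hKinv
  obtain ⟨h11, h12, h21, h22⟩ := fromBlocks_inj.1 hKinv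
  have hSdet : IsUnit S.det := isUnit_iff_ne_zero.2 hdetS
  have hSinv : (psub Sg⁻¹ Dᶜ)⁻¹ = S := by
    rw [h22, invOf_eq_nonsing_inv, nonsing_inv_nonsing_inv _ hSdet]
  -- the regression coefficient
  have hcoef : C * A⁻¹ = -((psub Sg⁻¹ Dᶜ)⁻¹ * msub Sg⁻¹ Dᶜ D) := by
    rw [hSinv, h21, Matrix.mul_neg, neg_neg, ← Matrix.mul_assoc, ← Matrix.mul_assoc,
      mul_invOf_self, Matrix.one_mul, invOf_eq_nonsing_inv]
  -- the conditional mean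
  have hvec : rest (Sg⁻¹ *ᵥ μ) Dᶜ =
      msub Sg⁻¹ Dᶜ D *ᵥ rest μ D + psub Sg⁻¹ Dᶜ *ᵥ rest μ Dᶜ := by
    have h0 : (μ ∘ e) ∘ e.symm = μ := by funext x; simp
    have h1 : (Sg⁻¹.submatrix e e) *ᵥ (μ ∘ e) = (Sg⁻¹ *ᵥ μ) ∘ e := by
      rw [submatrix_mulVec_equiv, h0]
    rw [submatrix_blockEquiv Sg⁻¹ D, comp_blockEquiv] at h1
    rw [fromBlocks_mulVec] at h1
    funext i
    have := congrFun h1 (Sum.inr i)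
    have h2 := this.symm
    simp at h2
    exact h2
  have hmean : rest μ Dᶜ - (C * A⁻¹) *ᵥ rest μ D =
      (psub Sg⁻¹ Dᶜ)⁻¹ *ᵥ rest (Sg⁻¹ *ᵥ μ) Dᶜ := by
    rw [hSinv, hvec, h21, h22, mulVec_add, mulVec_mulVec, mulVec_mulVec,
      Matrix.mul_neg, ← Matrix.mul_assoc, ← Matrix.mul_assoc, mul_invOf_self,
      Matrix.one_mul, Matrix.neg_mulVec, Matrix.one_mulVec,
      invOf_eq_nonsing_inv, neg_add_eq_sub]
  -- the Schur complement
  have hschur : E - C * A⁻¹ * B = (psub Sg⁻¹ Dᶜ)⁻¹ := by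
    rw [hSinv, hS', invOf_eq_nonsing_inv]
  show (rest μ Dᶜ - (C * A⁻¹) *ᵥ rest μ D, C * A⁻¹, E - C * A⁻¹ * B) = _
  rw [hmean, hschur, hcoef]

end Master

def IsSeedSet {V : Type*} [Fintype V] [DecidableEq V]
    (μ₁ : V → ℝ) (S₁ : Matrix V V ℝ) (μ₂ : V → ℝ) (S₂ : Matrix V V ℝ)
    (D : Finset V) : Prop :=
  condParams μ₁ S₁ Dᶜ D = condParams μ₂ S₂ Dᶜ D

/-- Any superset of a seed set is a seed set. -/
theorem stmt_9 {V : Type*} [Fintype V] [DecidableEq V]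
    (μ₁ μ₂ : V → ℝ) (S₁ S₂ : Matrix V V ℝ)
    (h₁sym : S₁.IsSymm) (h₂sym : S₂.IsSymm)
    (h₁ : S₁.PosDef) (h₂ : S₂.PosDef)
    (D D' : Finset V) (hseed : IsSeedSet μ₁ S₁ μ₂ S₂ D) (hDD' : D ⊆ D') :
    IsSeedSet μ₁ S₁ μ₂ S₂ D' := by
  have hK₁ : (S₁⁻¹).PosDef := h₁.inv
  have hK₂ : (S₂⁻¹).PosDef := h₂.inv
  have hseed' : condParams μ₁ S₁ Dᶜ D = condParams μ₂ S₂ Dᶜ D := hseed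
  rw [condParams_eq_precision μ₁ S₁ h₁ D, condParams_eq_precision μ₂ S₂ h₂ D] at hseed'
  simp only [Prod.mk.injEq] at hseed'
  obtain ⟨e1, e2, e3⟩ := hseed'
  have hp1 : (psub S₁⁻¹ Dᶜ).PosDef := posDef_submatrix_of_injective hK₁ Subtype.val_injective
  have hp2 : (psub S₂⁻¹ Dᶜ).PosDef := posDef_submatrix_of_injective hK₂ Subtype.val_injective
  have hd1 : IsUnit (psub S₁⁻¹ Dᶜ).det := isUnit_iff_ne_zero.2 hp1.det_pos.ne'
  have hd2 : IsUnit (psub S₂⁻¹ Dᶜ).det := isUnit_iff_ne_zero.2 hp2.det_pos.ne'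
  have hpsub : psub S₁⁻¹ Dᶜ = psub S₂⁻¹ Dᶜ := by
    rw [← nonsing_inv_nonsing_inv (psub S₁⁻¹ Dᶜ) hd1, e3, nonsing_inv_nonsing_inv _ hd2]
  have e2' : (psub S₁⁻¹ Dᶜ)⁻¹ * msub S₁⁻¹ Dᶜ D = (psub S₂⁻¹ Dᶜ)⁻¹ * msub S₂⁻¹ Dᶜ D :=
    neg_injective e2
  have hmsub : msub S₁⁻¹ Dᶜ D = msub S₂⁻¹ Dᶜ D := by
    calc msub S₁⁻¹ Dᶜ D
        = psub S₁⁻¹ Dᶜ * ((psub S₁⁻¹ Dᶜ)⁻¹ * msub S₁⁻¹ Dᶜ D) :=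
          (mul_nonsing_inv_cancel_left _ _ hd1).symm
      _ = psub S₂⁻¹ Dᶜ * ((psub S₂⁻¹ Dᶜ)⁻¹ * msub S₂⁻¹ Dᶜ D) := by rw [e2', hpsub]
      _ = msub S₂⁻¹ Dᶜ D := mul_nonsing_inv_cancel_left _ _ hd2
  have hrest : rest (S₁⁻¹ *ᵥ μ₁) Dᶜ = rest (S₂⁻¹ *ᵥ μ₂) Dᶜ := by
    calc rest (S₁⁻¹ *ᵥ μ₁) Dᶜ
        = psub S₁⁻¹ Dᶜ *ᵥ ((psub S₁⁻¹ Dᶜ)⁻¹ *ᵥ rest (S₁⁻¹ *ᵥ μ₁) Dᶜ) := by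
          rw [mulVec_mulVec, mul_nonsing_inv _ hd1, one_mulVec]
      _ = psub S₂⁻¹ Dᶜ *ᵥ ((psub S₂⁻¹ Dᶜ)⁻¹ *ᵥ rest (S₂⁻¹ *ᵥ μ₂) Dᶜ) := by rw [e1, hpsub]
      _ = rest (S₂⁻¹ *ᵥ μ₂) Dᶜ := by rw [mulVec_mulVec, mul_nonsing_inv _ hd2, one_mulVec]
  have hrow : ∀ i j : V, i ∉ D → S₁⁻¹ i j = S₂⁻¹ i j := by
    intro i j hi
    by_cases hj : j ∈ D
    · exact congrFun (congrFun hmsub ⟨i, Finset.mem_compl.2 hi⟩) ⟨j, hj⟩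
    · exact congrFun (congrFun hpsub ⟨i, Finset.mem_compl.2 hi⟩) ⟨j, Finset.mem_compl.2 hj⟩
  have hvec : ∀ i : V, i ∉ D → (S₁⁻¹ *ᵥ μ₁) i = (S₂⁻¹ *ᵥ μ₂) i := fun i hi =>
    congrFun hrest ⟨i, Finset.mem_compl.2 hi⟩
  have notD : ∀ i : V, i ∈ (D'ᶜ : Finset V) → i ∉ D := fun i hi h =>
    (Finset.mem_compl.1 hi) (hDD' h)
  have hpsub' : psub S₁⁻¹ D'ᶜ = psub S₂⁻¹ D'ᶜ := by
    ext i j; exact hrow i.1 j.1 (notD i.1 i.2)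
  have hmsub' : msub S₁⁻¹ D'ᶜ D' = msub S₂⁻¹ D'ᶜ D' := by
    ext i j; exact hrow i.1 j.1 (notD i.1 i.2)
  have hrest' : rest (S₁⁻¹ *ᵥ μ₁) D'ᶜ = rest (S₂⁻¹ *ᵥ μ₂) D'ᶜ := by
    funext i; exact hvec i.1 (notD i.1 i.2)
  show condParams μ₁ S₁ D'ᶜ D' = condParams μ₂ S₂ D'ᶜ D'
  rw [condParams_eq_precision μ₁ S₁ h₁ D', condParams_eq_precision μ₂ S₂ h₂ D',
    hpsub', hmsub', hrest']
end
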